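/- Let Y be the triode: in the Euclidean plane, let D be the origin and A, B, C three points at distance 1 from D with the three segments making equal angles of 120° (concretely A = (1,0), B = (−1/2, √3/2), C = (−1/2, −√3/2)), and let Y = [D,A] ∪ [D,B] ∪ [D,C] with the Euclidean metric. Suppose ∧ and ∨ are binary operations on Y satisfying the lattice axioms (both operations commutative and associative, and the absorption laws x ∧ (x ∨ y) = x and x ∨ (x ∧ y) = x for all x, y ∈ Y), and suppose 0 < δ₀ ≤ δ₁ ≤ δ₂ ≤ δ₃ are reals such that each of ∧ and ∨ (with respect to the sum metric on Y × Y) is (δ₀,δ₁)-constrained, (δ₁,δ₂)-constrained, and (δ₂,δ₃)-constrained. Then δ₃ ≥ 0.5. (Hence μ₃*(Y, lattice theory) ≥ 0.5.) -/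

import Mathlib

/-- The triode `Y ⊆ ℝ²`: union of the three unit segments from the origin `D`
to `A = (1,0)`, `B = (−1/2, √3/2)`, `C = (−1/2, −√3/2)`, with the Euclidean metric. -/
noncomputable def Triode : Set (EuclideanSpace ℝ (Fin 2)) :=
  segment ℝ (0 : EuclideanSpace ℝ (Fin 2)) ((WithLp.equiv 2 (Fin 2 → ℝ)).symm ![1, 0]) ∪
  segment ℝ (0 : EuclideanSpace ℝ (Fin 2))
    ((WithLp.equiv 2 (Fin 2 → ℝ)).symm ![-(1/2), Real.sqrt 3 / 2]) ∪
  segment ℝ (0 : EuclideanSpace ℝ (Fin 2))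
    ((WithLp.equiv 2 (Fin 2 → ℝ)).symm ![-(1/2), -(Real.sqrt 3 / 2)])

namespace TriodeProof

abbrev E2 := EuclideanSpace ℝ (Fin 2)

noncomputable def vA : E2 := (WithLp.equiv 2 (Fin 2 → ℝ)).symm ![1, 0]
noncomputable def vB : E2 := (WithLp.equiv 2 (Fin 2 → ℝ)).symm ![-(1/2), Real.sqrt 3 / 2]
noncomputable def vC : E2 := (WithLp.equiv 2 (Fin 2 → ℝ)).symm ![-(1/2), -(Real.sqrt 3 / 2)]

def IsDir (P : E2) : Prop := P = vA ∨ P = vB ∨ P = vC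

def onArm (P x : E2) : Prop := ∃ s : ℝ, 0 ≤ s ∧ s ≤ 1 ∧ x = s • P

lemma sq3 : Real.sqrt 3 * Real.sqrt 3 = 3 := Real.mul_self_sqrt (by norm_num)

lemma normA : ‖vA‖ = 1 := by
  simp [vA, EuclideanSpace.norm_eq, Fin.sum_univ_two]

lemma normB : ‖vB‖ = 1 := by
  have h3 := sq3
  simp [vB, EuclideanSpace.norm_eq, Fin.sum_univ_two]
  rw [show ((2:ℝ) ^ 2)⁻¹ + (Real.sqrt 3 / 2) ^ 2 = 1 by nlinarith]

lemma normC : ‖vC‖ = 1 := by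
  have h3 := sq3
  simp [vC, EuclideanSpace.norm_eq, Fin.sum_univ_two]
  rw [show ((2:ℝ) ^ 2)⁻¹ + (Real.sqrt 3 / 2) ^ 2 = 1 by nlinarith]

lemma dir_norm {P : E2} (hP : IsDir P) : ‖P‖ = 1 := by
  rcases hP with h | h | h <;> subst h
  exacts [normA, normB, normC]

lemma innerAB : (inner ℝ vA vB : ℝ) = -(1/2) := by
  simp [vA, vB, PiLp.inner_apply, Fin.sum_univ_two]

lemma innerAC : (inner ℝ vA vC : ℝ) = -(1/2) := by
  simp [vA, vC, PiLp.inner_apply, Fin.sum_univ_two]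

lemma innerBC : (inner ℝ vB vC : ℝ) = -(1/2) := by
  have h3 := sq3
  simp [vB, vC, PiLp.inner_apply, Fin.sum_univ_two]
  nlinarith

lemma neAB : vA ≠ vB := by
  intro h
  have := congrFun (congrArg (WithLp.equiv 2 (Fin 2 → ℝ)) h) 0
  simp [vA, vB] at this
  norm_num at this

lemma neAC : vA ≠ vC := by
  intro h
  have := congrFun (congrArg (WithLp.equiv 2 (Fin 2 → ℝ)) h) 0
  simp [vA, vC] at this
  norm_num at this

lemma neBC : vB ≠ vC := by
  intro h
  have h3 := sq3
  have := congrFun (congrArg (WithLp.equiv 2 (Fin 2 → ℝ)) h) 1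
  simp [vB, vC] at this
  nlinarith

lemma dir_inner {P Q : E2} (hP : IsDir P) (hQ : IsDir Q) (hne : P ≠ Q) :
    (inner ℝ P Q : ℝ) = -(1/2) := by
  rcases hP with h | h | h <;> rcases hQ with h' | h' | h' <;> subst h <;> subst h' <;>
    first
      | exact absurd rfl hne
      | exact innerAB
      | exact innerAC
      | exact innerBC
      | (rw [real_inner_comm]; exact innerAB)
      | (rw [real_inner_comm]; exact innerAC)
      | (rw [real_inner_comm]; exact innerBC)

lemma cross {P Q : E2} (hP : IsDir P) (hQ : IsDir Q) (hne : P ≠ Q)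
    {s t : ℝ} (hs : 0 ≤ s) (ht : 0 ≤ t) : s ≤ ‖s • P - t • Q‖ := by
  have h1 : ‖s • P - t • Q‖ ^ 2 = s ^ 2 + s * t + t ^ 2 := by
    rw [norm_sub_sq_real, norm_smul, norm_smul, real_inner_smul_left,
      real_inner_smul_right, dir_inner hP hQ hne, dir_norm hP, dir_norm hQ,
      Real.norm_eq_abs, Real.norm_eq_abs, abs_of_nonneg hs, abs_of_nonneg ht]
    ring
  nlinarith [norm_nonneg (s • P - t • Q)]

lemma seg_char (v x : E2) :
    x ∈ segment ℝ (0 : E2) v ↔ ∃ s : ℝ, 0 ≤ s ∧ s ≤ 1 ∧ x = s • v := by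
  rw [segment_eq_image]
  constructor
  · rintro ⟨θ, ⟨h0, h1⟩, rfl⟩
    exact ⟨θ, h0, h1, by simp⟩
  · rintro ⟨s, h0, h1, rfl⟩
    exact ⟨s, ⟨h0, h1⟩, by simp⟩

lemma mem_triode_iff (x : E2) :
    x ∈ Triode ↔ onArm vA x ∨ onArm vB x ∨ onArm vC x := by
  unfold Triode
  rw [Set.mem_union, Set.mem_union, seg_char, seg_char, seg_char]
  rw [or_assoc]
  exact Iff.rfl

lemma two_arms {P Q x : E2} (hP : IsDir P) (hQ : IsDir Q) (hne : P ≠ Q)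
    (h1 : onArm P x) (h2 : onArm Q x) : x = 0 := by
  obtain ⟨s, hs0, _, rfl⟩ := h1
  obtain ⟨t, ht0, _, hx⟩ := h2
  have h := cross hP hQ hne hs0 ht0
  rw [← hx, sub_self, norm_zero] at h
  have : s = 0 := le_antisymm h hs0
  rw [this, zero_smul]

lemma norm_onArm {P x : E2} (hP : IsDir P) {s : ℝ} (hs : 0 ≤ s) (hx : x = s • P) :
    ‖x‖ = s := by
  rw [hx, norm_smul, Real.norm_eq_abs, abs_of_nonneg hs, dir_norm hP, mul_one]

lemma triode_norm_le_one {x : E2} (hx : x ∈ Triode) : ‖x‖ ≤ 1 := by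
  rw [mem_triode_iff] at hx
  rcases hx with ⟨s, h0, h1, rfl⟩ | ⟨s, h0, h1, rfl⟩ | ⟨s, h0, h1, rfl⟩ <;>
    rw [norm_onArm (by first | exact Or.inl rfl | exact Or.inr (Or.inl rfl) | exact Or.inr (Or.inr rfl)) h0 rfl] <;> exact h1

lemma smul_mem_triode {a : ℝ} (h0 : 0 ≤ a) (h1 : a ≤ 1) {x : E2} (hx : x ∈ Triode) :
    a • x ∈ Triode := by
  rw [mem_triode_iff] at hx ⊢
  rcases hx with ⟨s, hs0, hs1, rfl⟩ | ⟨s, hs0, hs1, rfl⟩ | ⟨s, hs0, hs1, rfl⟩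
  · exact Or.inl ⟨a * s, by positivity, by nlinarith, smul_smul a s _⟩
  · exact Or.inr (Or.inl ⟨a * s, by positivity, by nlinarith, smul_smul a s _⟩)
  · exact Or.inr (Or.inr ⟨a * s, by positivity, by nlinarith, smul_smul a s _⟩)

lemma dir_mem_triode {P : E2} (hP : IsDir P) : P ∈ Triode := by
  rw [mem_triode_iff]
  rcases hP with h | h | h <;> subst h
  · exact Or.inl ⟨1, zero_le_one, le_refl 1, (one_smul ℝ _).symm⟩
  · exact Or.inr (Or.inl ⟨1, zero_le_one, le_refl 1, (one_smul ℝ _).symm⟩)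
  · exact Or.inr (Or.inr ⟨1, zero_le_one, le_refl 1, (one_smul ℝ _).symm⟩)

lemma zero_mem_triode : (0 : E2) ∈ Triode :=
  Or.inl (Or.inl (left_mem_segment ℝ _ _))

lemma stay {P x y : E2} (hP : IsDir P) (hx : onArm P x) (hr : 1/2 ≤ ‖x‖)
    (hy : y ∈ Triode) (hd : dist x y < 1/2) : onArm P y := by
  rw [mem_triode_iff] at hy
  have key : ∀ Q : E2, IsDir Q → onArm Q y → onArm P y := by
    intro Q hQ hyQ
    by_cases hPQ : P = Q
    · rwa [hPQ]
    · obtain ⟨s, hs0, hs1, rfl⟩ := hx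
      obtain ⟨t, ht0, ht1, rfl⟩ := hyQ
      have h := cross hP hQ hPQ hs0 ht0
      rw [dist_eq_norm] at hd
      have hns : ‖s • P‖ = s := norm_onArm hP hs0 rfl
      rw [hns] at hr
      linarith
  rcases hy with h | h | h
  · exact key vA (Or.inl rfl) h
  · exact key vB (Or.inr (Or.inl rfl)) h
  · exact key vC (Or.inr (Or.inr rfl)) h


lemma chain_helper (δ₀ δ₁ : ℝ) (h0 : 0 < δ₀) (h01 : δ₀ ≤ δ₁) (hδ₁ : δ₁ < 1/2)
    (P : E2) (hP : IsDir P)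
    (E endpt : Triode) (hE : (E : E2) = P)
    (F : Triode → Triode)
    (hF : ∀ p q : Triode, dist p q < δ₀ → dist (F p) (F q) < δ₁)
    (hFE : F E = E) (hFend : F endpt = endpt)
    (hoff : onArm P (endpt : E2) → (endpt : E2) = 0) :
    ∃ z : Triode, (∃ x : Triode, z = F x) ∧ onArm P (z : E2) ∧
      1/2 - δ₁ < ‖(z : E2)‖ ∧ ‖(z : E2)‖ < 1/2 := by
  classical
  -- the number of steps
  set N : ℕ := ⌈1/δ₀⌉₊ + 1 with hN
  have hN1 : 1 ≤ N := Nat.le_add_left 1 _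
  have hNpos : (0:ℝ) < N := by positivity
  have hstep : (1:ℝ)/N < δ₀ := by
    rw [div_lt_iff₀ hNpos]
    have h1 : (1:ℝ)/δ₀ ≤ (⌈1/δ₀⌉₊ : ℝ) := Nat.le_ceil _
    have h2 : ((⌈1/δ₀⌉₊ : ℝ)) < N := by
      rw [hN]; push_cast; linarith
    have := (div_lt_iff₀ h0).mp (lt_of_le_of_lt h1 h2)
    linarith [this]
  -- the path from E to endpt through the origin
  have hPmem : P ∈ Triode := dir_mem_triode hP
  set pt : ℕ → E2 := fun j =>
    if j ≤ N then (((N - j : ℕ) : ℝ)/N) • P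
    else (((min (j - N) N : ℕ) : ℝ)/N) • (endpt : E2) with hpt
  have hmem : ∀ j, pt j ∈ Triode := by
    intro j
    rw [hpt]
    by_cases hj : j ≤ N <;> simp only [hj, if_true, if_false, reduceIte]
    · refine smul_mem_triode ?_ ?_ hPmem
      · positivity
      · rw [div_le_one hNpos]
        exact_mod_cast Nat.cast_le.mpr (Nat.sub_le N j)
    · refine smul_mem_triode ?_ ?_ endpt.2
      · positivity
      · rw [div_le_one hNpos]
        exact_mod_cast Nat.cast_le.mpr (min_le_right (j - N) N)
  set chain : ℕ → Triode := fun j => ⟨pt j, hmem j⟩ with hchain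
  set v : ℕ → Triode := fun j => F (chain j) with hv
  have hpt0 : pt 0 = P := by
    rw [hpt]
    simp only [Nat.zero_le, if_true, Nat.sub_zero, reduceIte]
    rw [div_self (ne_of_gt hNpos), one_smul]
  have hchain0 : chain 0 = E := by
    apply Subtype.ext
    show pt 0 = (E : E2)
    rw [hpt0, hE]
  have hv0 : v 0 = E := by rw [hv]; simp only [hchain0, hFE]
  have hptM : pt (2*N) = (endpt : E2) := by
    rw [hpt]
    have h1 : ¬ (2*N ≤ N) := by omega
    simp only [h1, if_false, reduceIte]
    have h2 : 2*N - N = N := by omega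
    rw [h2, min_self, div_self (ne_of_gt hNpos), one_smul]
  have hvM : v (2*N) = endpt := by
    rw [hv]
    have h : chain (2*N) = endpt := Subtype.ext hptM
    show F (chain (2*N)) = endpt
    rw [h, hFend]
  have hnormend : ‖(endpt : E2)‖ ≤ 1 := triode_norm_le_one endpt.2
  -- consecutive steps are small
  have hstepdist : ∀ j, dist (chain j) (chain (j+1)) < δ₀ := by
    intro j
    rw [Subtype.dist_eq, dist_eq_norm]
    show ‖pt j - pt (j+1)‖ < δ₀
    by_cases hj1 : j + 1 ≤ N
    · have hj : j ≤ N := by omega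
      rw [hpt]
      simp only [hj, hj1, if_true, reduceIte]
      rw [← sub_smul]
      have hcast : (((N - j : ℕ) : ℝ)/N - ((N - (j+1) : ℕ) : ℝ)/N) = 1/N := by
        rw [Nat.cast_sub hj, Nat.cast_sub hj1]
        push_cast
        field_simp
        ring
      rw [hcast, norm_smul, Real.norm_eq_abs, abs_of_pos (by positivity), dir_norm hP, mul_one]
      exact hstep
    · by_cases hj : j ≤ N
      · -- j = N
        have hjN : j = N := by omega
        subst hjN
        rw [hpt]
        simp only [le_refl, if_true, hj1, reduceIte]
        rw [Nat.sub_self]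
        have hmin : min (N + 1 - N) N = 1 := by omega
        rw [hmin]
        simp only [Nat.cast_zero, Nat.cast_one, zero_div, zero_smul, zero_sub, norm_neg]
        rw [norm_smul, Real.norm_eq_abs, abs_of_pos (by positivity)]
        calc (1:ℝ)/N * ‖(endpt : E2)‖ ≤ 1/N * 1 := by
              apply mul_le_mul_of_nonneg_left hnormend (by positivity)
          _ < δ₀ := by rwa [mul_one]
      · -- j > N
        have hj1' : ¬ (j + 1 ≤ N) := by omega
        rw [hpt]
        simp only [hj, hj1', if_false, reduceIte]
        rw [← sub_smul]
        have hd : min (j + 1 - N) N - min (j - N) N ≤ 1 := by omega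
        have hd0 : min (j - N) N ≤ min (j + 1 - N) N := by omega
        have habs : |(((min (j - N) N : ℕ) : ℝ)/N - ((min (j + 1 - N) N : ℕ) : ℝ)/N)| ≤ 1/N := by
          rw [abs_sub_comm, ← sub_div, abs_div, abs_of_pos hNpos, div_le_div_iff_of_pos_right hNpos]
          rw [← Nat.cast_sub hd0, abs_of_nonneg (by positivity)]
          exact_mod_cast hd
        calc ‖(((min (j - N) N : ℕ) : ℝ)/N - ((min (j + 1 - N) N : ℕ) : ℝ)/N) • (endpt:E2)‖
            = |(((min (j - N) N : ℕ) : ℝ)/N - ((min (j + 1 - N) N : ℕ) : ℝ)/N)| * ‖(endpt:E2)‖ := by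
              rw [norm_smul, Real.norm_eq_abs]
          _ ≤ 1/N * 1 := by
              apply mul_le_mul habs hnormend (norm_nonneg _) (by positivity)
          _ < δ₀ := by rwa [mul_one]
  have hvstep : ∀ j, dist (v j) (v (j+1)) < δ₁ := fun j => hF _ _ (hstepdist j)
  -- existence of a point of small norm
  have hex : ∃ j, ‖(v j : E2)‖ < 1/2 := by
    by_contra hcon
    push_neg at hcon
    have harm : ∀ j, onArm P ((v j : Triode) : E2) := by
      intro j
      induction j with
      | zero => exact ⟨1, zero_le_one, le_refl 1, by rw [hv0, hE, one_smul]⟩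
      | succ j ih =>
        refine stay hP ih (hcon j) (v (j+1)).2 ?_
        have := hvstep j
        rw [Subtype.dist_eq] at this
        linarith
    have h1 := harm (2*N)
    rw [hvM] at h1
    have h2 := hoff h1
    have := hcon (2*N)
    rw [hvM, h2, norm_zero] at this
    linarith
  have hkspec : ‖(v (Nat.find hex) : E2)‖ < 1/2 := Nat.find_spec hex
  have hknz : Nat.find hex ≠ 0 := by
    intro hk0
    rw [hk0, hv0, hE, dir_norm hP] at hkspec
    linarith
  obtain ⟨k', hk'⟩ : ∃ k'', Nat.find hex = k'' + 1 := ⟨Nat.find hex - 1, by omega⟩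
  rw [hk'] at hkspec
  have hmin : ∀ j, j ≤ k' → 1/2 ≤ ‖(v j : E2)‖ := by
    intro j hj
    have := Nat.find_min hex (m := j) (by omega)
    linarith [not_lt.mp this]
  have harm' : ∀ j, j ≤ k' → onArm P ((v j : Triode) : E2) := by
    intro j
    induction j with
    | zero => intro _; exact ⟨1, zero_le_one, le_refl 1, by rw [hv0, hE, one_smul]⟩
    | succ j ih =>
      intro hj
      refine stay hP (ih (by omega)) (hmin j (by omega)) (v (j+1)).2 ?_
      have := hvstep j
      rw [Subtype.dist_eq] at this
      linarith
  have harmk : onArm P ((v (k'+1) : Triode) : E2) := by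
    refine stay hP (harm' k' le_rfl) (hmin k' le_rfl) (v (k'+1)).2 ?_
    have := hvstep k'
    rw [Subtype.dist_eq] at this
    linarith
  have hlow : 1/2 - δ₁ < ‖(v (k'+1) : E2)‖ := by
    have h1 := hvstep k'
    rw [Subtype.dist_eq, dist_eq_norm] at h1
    have h2 := norm_sub_norm_le ((v k' : E2)) ((v (k'+1) : E2))
    have h3 := hmin k' le_rfl
    linarith
  exact ⟨v (k'+1), ⟨chain (k'+1), rfl⟩, harmk, hlow, hkspec⟩

end TriodeProof

open TriodeProof

/-- If `∧`, `∨` are lattice operations on the triode `Y`, each `(δ₀,δ₁)`-, `(δ₁,δ₂)`-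
and `(δ₂,δ₃)`-constrained (with the sum metric on `Y × Y`), where
`0 < δ₀ ≤ δ₁ ≤ δ₂ ≤ δ₃`, then `δ₃ ≥ 0.5`. -/
theorem triode_lattice_delta3_ge_half
    (meet join : Triode → Triode → Triode)
    -- lattice axioms:
    (hmc : ∀ x y, meet x y = meet y x)
    (hjc : ∀ x y, join x y = join y x)
    (hma : ∀ x y z, meet (meet x y) z = meet x (meet y z))
    (hja : ∀ x y z, join (join x y) z = join x (join y z))
    (habs1 : ∀ x y, meet x (join x y) = x)
    (habs2 : ∀ x y, join x (meet x y) = x)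
    (δ₀ δ₁ δ₂ δ₃ : ℝ)
    (h0 : 0 < δ₀) (h01 : δ₀ ≤ δ₁) (h12 : δ₁ ≤ δ₂) (h23 : δ₂ ≤ δ₃)
    -- constraints (sum metric on the product):
    (hm01 : ∀ x y x' y', dist x x' + dist y y' < δ₀ → dist (meet x y) (meet x' y') < δ₁)
    (hm12 : ∀ x y x' y', dist x x' + dist y y' < δ₁ → dist (meet x y) (meet x' y') < δ₂)
    (hm23 : ∀ x y x' y', dist x x' + dist y y' < δ₂ → dist (meet x y) (meet x' y') < δ₃)
    (hj01 : ∀ x y x' y', dist x x' + dist y y' < δ₀ → dist (join x y) (join x' y') < δ₁)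
    (hj12 : ∀ x y x' y', dist x x' + dist y y' < δ₁ → dist (join x y) (join x' y') < δ₂)
    (hj23 : ∀ x y x' y', dist x x' + dist y y' < δ₂ → dist (join x y) (join x' y') < δ₃) :
    (0.5 : ℝ) ≤ δ₃ := by

  classical
  open TriodeProof in
  by_contra hcon
  rw [not_le] at hcon
  have hhalf : (0.5 : ℝ) = 1/2 := by norm_num
  have hδ₃ : δ₃ < 1/2 := by rw [hhalf] at hcon; exact hcon
  have hδ₂ : δ₂ < 1/2 := lt_of_le_of_lt h23 hδ₃
  have hδ₁ : δ₁ < 1/2 := lt_of_le_of_lt h12 hδ₂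
  have dirA : IsDir vA := Or.inl rfl
  have dirB : IsDir vB := Or.inr (Or.inl rfl)
  have dirC : IsDir vC := Or.inr (Or.inr rfl)
  set A : Triode := ⟨vA, dir_mem_triode dirA⟩ with hA
  set B : Triode := ⟨vB, dir_mem_triode dirB⟩ with hB
  set C : Triode := ⟨vC, dir_mem_triode dirC⟩ with hC
  have idem_meet : ∀ x, meet x x = x := by
    intro x
    have h := habs1 x (meet x x)
    rwa [habs2 x x] at h
  have idem_join : ∀ x, join x x = x := by
    intro x
    have h := habs2 x (join x x)
    rwa [habs1 x x] at h
  set b : Triode := meet A (meet B C) with hb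
  set t : Triode := join A (join B C) with ht
  have hbB : b = meet B (meet A C) := by rw [hb, ← hma, hmc A B, hma]
  have hbC : b = meet C (meet A B) := by rw [hb, hmc B C, ← hma, hmc A C, hma]
  have htB : t = join B (join A C) := by rw [ht, ← hja, hjc A B, hja]
  have htC : t = join C (join A B) := by rw [ht, hjc B C, ← hja, hjc A C, hja]
  -- the master contradiction, given a suitable endpoint E
  have final : ∀ (Ept : Triode) (P : E2), IsDir P → (Ept : E2) = P →
      (onArm P (b : E2) → (b : E2) = 0) → (onArm P (t : E2) → (t : E2) = 0) →
      meet Ept b = b → join Ept t = t → False := by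
    intro Ept P hP hEP hbarm htarm hmb hjt
    -- descending chain: x ↦ meet Ept x, from Ept to b
    obtain ⟨z, ⟨xz, hz⟩, ⟨a, ha0, ha1, hza⟩, hzl, hzu⟩ :=
      chain_helper δ₀ δ₁ h0 h01 hδ₁ P hP Ept b hEP (fun x => meet Ept x)
        (fun p q hd => hm01 Ept p Ept q (by rwa [dist_self, zero_add]))
        (idem_meet Ept) hmb hbarm
    -- ascending chain: x ↦ join Ept x, from Ept to t
    obtain ⟨w, ⟨yw, hw⟩, ⟨c, hc0, hc1, hwc⟩, hwl, hwu⟩ :=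
      chain_helper δ₀ δ₁ h0 h01 hδ₁ P hP Ept t hEP (fun x => join Ept x)
        (fun p q hd => hj01 Ept p Ept q (by rwa [dist_self, zero_add]))
        (idem_join Ept) hjt htarm
    have hmez : meet Ept z = z := by rw [hz, ← hma, idem_meet]
    have hmew : meet Ept w = Ept := by rw [hw]; exact habs1 Ept yw
    have hnz : ‖(z : E2)‖ = a := norm_onArm hP ha0 hza
    have hnw : ‖(w : E2)‖ = c := norm_onArm hP hc0 hwc
    rw [hnz] at hzl hzu
    rw [hnw] at hwl hwu
    have hdzw : dist z w < δ₂ := by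
      rw [Subtype.dist_eq, dist_eq_norm, hza, hwc, ← sub_smul, norm_smul,
        Real.norm_eq_abs, dir_norm hP, mul_one]
      have : |a - c| < δ₁ := abs_sub_lt_iff.mpr ⟨by linarith, by linarith⟩
      linarith
    have hfin := hm23 Ept z Ept w (by rwa [dist_self, zero_add])
    rw [hmez, hmew] at hfin
    have hdzE : dist z Ept = 1 - a := by
      rw [Subtype.dist_eq, dist_eq_norm, hza, hEP]
      nth_rewrite 2 [← one_smul ℝ P]
      rw [← sub_smul, norm_smul, Real.norm_eq_abs, dir_norm hP, mul_one,
        abs_of_nonpos (by linarith)]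
      ring
    rw [hdzE] at hfin
    linarith
  -- choose the endpoint E whose arm avoids b and t
  have hbfacts : meet A b = b ∧ join A t = t := by
    constructor
    · rw [hb, ← hma, idem_meet]
    · rw [ht, ← hja, idem_join]
  have hBfacts : meet B b = b ∧ join B t = t := by
    constructor
    · rw [hbB, ← hma, idem_meet]
    · rw [htB, ← hja, idem_join]
  have hCfacts : meet C b = b ∧ join C t = t := by
    constructor
    · rw [hbC, ← hma, idem_meet]
    · rw [htC, ← hja, idem_join]
  rcases (mem_triode_iff (b : E2)).mp b.2 with hba | hba | hba <;>
    rcases (mem_triode_iff (t : E2)).mp t.2 with hta | hta | hta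
  · exact final C vC dirC rfl (fun h => two_arms dirC dirA (Ne.symm neAC) h hba)
      (fun h => two_arms dirC dirA (Ne.symm neAC) h hta) hCfacts.1 hCfacts.2
  · exact final C vC dirC rfl (fun h => two_arms dirC dirA (Ne.symm neAC) h hba)
      (fun h => two_arms dirC dirB (Ne.symm neBC) h hta) hCfacts.1 hCfacts.2
  · exact final B vB dirB rfl (fun h => two_arms dirB dirA (Ne.symm neAB) h hba)
      (fun h => two_arms dirB dirC neBC h hta) hBfacts.1 hBfacts.2
  · exact final C vC dirC rfl (fun h => two_arms dirC dirB (Ne.symm neBC) h hba)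
      (fun h => two_arms dirC dirA (Ne.symm neAC) h hta) hCfacts.1 hCfacts.2
  · exact final A vA dirA rfl (fun h => two_arms dirA dirB neAB h hba)
      (fun h => two_arms dirA dirB neAB h hta) hbfacts.1 hbfacts.2
  · exact final A vA dirA rfl (fun h => two_arms dirA dirB neAB h hba)
      (fun h => two_arms dirA dirC neAC h hta) hbfacts.1 hbfacts.2
  · exact final B vB dirB rfl (fun h => two_arms dirB dirC neBC h hba)
      (fun h => two_arms dirB dirA (Ne.symm neAB) h hta) hBfacts.1 hBfacts.2
  · exact final A vA dirA rfl (fun h => two_arms dirA dirC neAC h hba)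
      (fun h => two_arms dirA dirB neAB h hta) hbfacts.1 hbfacts.2
  · exact final A vA dirA rfl (fun h => two_arms dirA dirC neAC h hba)
      (fun h => two_arms dirA dirC neAC h hta) hbfacts.1 hbfacts.2
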